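/- Let θ ∈ (0,1] with greedy sequence (a_n). If for some index m the error e_{m−1} = θ − Σ_{n<m} 1/a_n satisfies (e_{m−1})^{−1} ∈ ℕ, then a_{n+1} = a_n² − a_n + 1 for all n ≥ m. -/

import Mathlib

theorem stmt_12 (θ : ℝ) (hθ : θ ∈ Set.Ioc (0:ℝ) 1) (a : ℕ → ℤ)
    (ha1 : a 1 = ⌊1/θ⌋ + 1)
    (harec : ∀ k, 2 ≤ k →
      a k = ⌊1/(θ - ∑ n ∈ Finset.Ico 1 k, (1:ℝ)/(a n))⌋ + 1)
    (m : ℕ) (hm : 1 ≤ m)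
    (h : ∃ M : ℕ, 0 < M ∧ (θ - ∑ n ∈ Finset.Ico 1 m, (1:ℝ)/(a n))⁻¹ = M) :
    ∀ n, m ≤ n → a (n+1) = (a n)^2 - a n + 1 := by
  set e : ℕ → ℝ := fun k => θ - ∑ n ∈ Finset.Ico 1 k, (1:ℝ)/(a n) with he
  have ha : ∀ k, 1 ≤ k → a k = ⌊(e k)⁻¹⌋ + 1 := by
    intro k hk
    rcases eq_or_lt_of_le hk with hk1 | hk2
    · subst hk1
      simp only [he, Finset.Ico_self, Finset.sum_empty, sub_zero]
      rw [ha1, one_div]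
    · rw [harec k hk2, one_div]
  have step : ∀ n, 1 ≤ n → ∀ M : ℕ, 0 < M → (e n)⁻¹ = M →
      a n = (M:ℤ) + 1 ∧ (e (n+1))⁻¹ = ((M*(M+1) : ℕ) : ℝ) := by
    intro n hn M hMpos hMe
    have hMR : (0:ℝ) < M := by exact_mod_cast hMpos
    have han : a n = (M:ℤ) + 1 := by
      rw [ha n hn, hMe, Int.floor_natCast]
    have hen : e n = (M:ℝ)⁻¹ := inv_eq_iff_eq_inv.mp hMe
    have hsum : e (n+1) = e n - 1/(a n) := by
      simp only [he]
      rw [Finset.sum_Ico_succ_top hn]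
      ring
    have hen1 : e (n+1) = ((M:ℝ)*(M+1))⁻¹ := by
      rw [hsum, hen, han]
      push_cast
      have h1 : (M:ℝ) + 1 ≠ 0 := by positivity
      field_simp
      ring
    refine ⟨han, ?_⟩
    rw [hen1, inv_inv]
    push_cast
    ring
  have inv : ∀ n, m ≤ n → ∃ M : ℕ, 0 < M ∧ (e n)⁻¹ = M := by
    intro n hn
    induction n, hn using Nat.le_induction with
    | base => exact h
    | succ n hn ih =>
      obtain ⟨M, hMpos, hMe⟩ := ih
      exact ⟨M*(M+1), by positivity, (step n (hm.trans hn) M hMpos hMe).2⟩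
  intro n hn
  obtain ⟨M, hMpos, hMe⟩ := inv n hn
  obtain ⟨han, hen1⟩ := step n (hm.trans hn) M hMpos hMe
  have han1 : a (n+1) = (M*(M+1) : ℕ) + 1 := by
    rw [ha (n+1) (by omega), hen1, Int.floor_natCast]
  rw [han1, han]
  push_cast
  ring
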